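/- arXiv:1704.05485 — 2 statements merged into one kernel-verified Lean document; each statement's English description precedes it below -/
import Mathlib

section
/- For n ≥ 4 even, the minimum over integers k with 2 ≤ k ≤ n of max(p(k,n), p̄(k,n)) is attained at k = n/2 + 1, where p̄(k,n) = 2(n+k)/(n+k-2) and p(k,n) = 2(n-1)/(n-2) for k ≤ 3, p(k,n) = 2(2n-k+1)/(2n-k-1) for k > 3. -/
noncomputable def pbar (k n : ℕ) : ℝ := 2 * ((n : ℝ) + k) / ((n : ℝ) + k - 2)

noncomputable def plin (k n : ℕ) : ℝ :=
  if k ≤ 3 then 2 * ((n : ℝ) - 1) / ((n : ℝ) - 2)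
  else 2 * (2 * (n : ℝ) - k + 1) / (2 * (n : ℝ) - k - 1)

/-- For even `n ≥ 4`, the minimum over `2 ≤ k ≤ n` of `max (p(k,n)) (p̄(k,n))`
is attained at `k = n/2 + 1`. -/
theorem stmt1 (n : ℕ) (hn : 4 ≤ n) (heven : Even n) :
    ∀ k : ℕ, 2 ≤ k → k ≤ n →
      max (plin (n / 2 + 1) n) (pbar (n / 2 + 1) n)
        ≤ max (plin k n) (pbar k n) := by
  intro k hk2 hkn
  obtain ⟨m, hm⟩ := heven
  have hm2 : n / 2 = m := by omega
  rw [hm2]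
  by_cases h4 : n = 4
  · have hm' : m = 2 := by omega
    subst hm'
    subst hm
    interval_cases k <;> norm_num [plin, pbar]
  · have hm3 : 3 ≤ m := by omega
    subst hm
    have hM3 : (3:ℝ) ≤ (m:ℝ) := by exact_mod_cast hm3
    have hK2 : (2:ℝ) ≤ (k:ℝ) := by exact_mod_cast hk2
    have hKn : (k:ℝ) ≤ (m:ℝ) + (m:ℝ) := by exact_mod_cast hkn
    have h1 : plin (m + 1) (m + m) ≤ 6 * (m:ℝ) / (3 * (m:ℝ) - 2) := by
      rw [plin, if_neg (by omega)]
      push_cast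
      rw [div_le_div_iff₀ (by linarith) (by linarith)]
      nlinarith
    have h2 : pbar (m + 1) (m + m) ≤ 6 * (m:ℝ) / (3 * (m:ℝ) - 2) := by
      rw [pbar]
      push_cast
      rw [div_le_div_iff₀ (by linarith) (by linarith)]
      nlinarith
    refine max_le (h1.trans ?_) (h2.trans ?_) <;>
    · by_cases hk : k ≤ m
      · have hKM : (k:ℝ) ≤ (m:ℝ) := by exact_mod_cast hk
        refine le_trans ?_ (le_max_right _ _)
        rw [pbar]
        push_cast
        rw [div_le_div_iff₀ (by linarith) (by linarith)]
        nlinarith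
      · have hKM : (m:ℝ) + 1 ≤ (k:ℝ) := by
          have : m + 1 ≤ k := by omega
          exact_mod_cast this
        refine le_trans ?_ (le_max_left _ _)
        rw [plin, if_neg (by omega)]
        push_cast
        rw [div_le_div_iff₀ (by linarith) (by linarith)]
        nlinarith
end

section
/- Let w̄ ∈ ℝ^{n-1}, wₙ ∈ ℝ with |w̄|² + wₙ² = 1 and |wₙ² - 1/2| ≤ δ for some 0 ≤ δ < 1/4, and let ξ = (ξ̄, ξₙ) ∈ ℝⁿ with |ξ̄| = ξₙ > 0. Suppose |ξ̄·w̄ - ξₙ wₙ| ≤ ε |ξ| for some ε ≥ 0. Then |ξ̄·w̄| / (|ξ̄| |w̄|) ≥ |wₙ|/|w̄| - ε·|ξ|/(|ξ̄||w̄|) ≥ 1 - C(δ + ε) for an absolute constant C (using |ξ| = √2 |ξ̄| and |w̄| ≤ 1). -/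
open RealInnerProductSpace

/-- Core estimate in Lemma 2.4: a point `ξ = (ξ̄, ξₙ)` on the light cone whose normal is
nearly orthogonal to a near-null unit vector `(w̄, -wₙ)` has `ξ̄` nearly parallel to `w̄`. -/
theorem stmt10 :
    ∃ C : ℝ, 0 < C ∧
      ∀ (m : ℕ) (wbar : EuclideanSpace ℝ (Fin m)) (wn : ℝ)
        (ξbar : EuclideanSpace ℝ (Fin m)) (ξn δ ε : ℝ),
        ‖wbar‖ ^ 2 + wn ^ 2 = 1 →
        0 ≤ δ → δ < 1 / 4 → |wn ^ 2 - 1 / 2| ≤ δ →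
        ‖ξbar‖ = ξn → 0 < ξn →
        0 ≤ ε →
        |⟪ξbar, wbar⟫ - ξn * wn| ≤ ε * Real.sqrt (‖ξbar‖ ^ 2 + ξn ^ 2) →
        (|⟪ξbar, wbar⟫| / (‖ξbar‖ * ‖wbar‖)
            ≥ |wn| / ‖wbar‖ - ε * Real.sqrt (‖ξbar‖ ^ 2 + ξn ^ 2) / (‖ξbar‖ * ‖wbar‖)) ∧
        (|wn| / ‖wbar‖ - ε * Real.sqrt (‖ξbar‖ ^ 2 + ξn ^ 2) / (‖ξbar‖ * ‖wbar‖)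
            ≥ 1 - C * (δ + ε)) := by
  refine ⟨4, by norm_num, ?_⟩
  intro m wbar wn ξbar ξn δ ε hw hδ0 hδ4 hwn hξ hξn hε hcl
  rw [abs_le] at hwn
  obtain ⟨hwn1, hwn2⟩ := hwn
  have hb2 : ‖wbar‖ ^ 2 = 1 - wn ^ 2 := by linarith
  have hbpos : (1:ℝ)/2 < ‖wbar‖ := by nlinarith [norm_nonneg wbar]
  have hb0 : 0 < ‖wbar‖ := by linarith
  have hSval : Real.sqrt (‖ξbar‖ ^ 2 + ξn ^ 2) = ξn * Real.sqrt 2 := by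
    rw [hξ, show ξn ^ 2 + ξn ^ 2 = ξn ^ 2 * 2 by ring,
      Real.sqrt_mul (by positivity), Real.sqrt_sq hξn.le]
  have hS2 : Real.sqrt 2 ≤ 2 := by
    nlinarith [Real.sq_sqrt (by norm_num : (0:ℝ) ≤ 2), Real.sqrt_nonneg 2,
      sq_nonneg (Real.sqrt 2 - 2)]
  have hDpos : 0 < ξn * ‖wbar‖ := mul_pos hξn hb0
  have h1 : ξn * |wn| - ε * Real.sqrt (‖ξbar‖ ^ 2 + ξn ^ 2) ≤ |⟪ξbar, wbar⟫| := by
    have h := abs_sub_abs_le_abs_sub (ξn * wn) ⟪ξbar, wbar⟫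
    rw [abs_sub_comm] at h
    have habs : |ξn * wn| = ξn * |wn| := by rw [abs_mul, abs_of_pos hξn]
    linarith [habs ▸ h, hcl]
  constructor
  · rw [ge_iff_le, hξ,
      show |wn| / ‖wbar‖ = ξn * |wn| / (ξn * ‖wbar‖) by
        field_simp,
      ← sub_div]
    rw [hξ] at h1
    gcongr
  · have h2 : 1 - 4 * δ ≤ |wn| / ‖wbar‖ := by
      have e1 : 0 ≤ (1 - 4*δ)^2 * (1/2 + δ - ‖wbar‖^2) :=
        mul_nonneg (sq_nonneg _) (by linarith)
      have e2 : 0 ≤ 2*δ*(1 - 16*δ^2) := by nlinarith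
      have hsq : ((1 - 4*δ) * ‖wbar‖)^2 ≤ |wn|^2 := by
        rw [sq_abs]; nlinarith
      have hle : (1 - 4*δ) * ‖wbar‖ ≤ |wn| := by
        have h0 : 0 ≤ (1 - 4*δ) * ‖wbar‖ := by nlinarith
        calc (1 - 4*δ) * ‖wbar‖ = Real.sqrt (((1 - 4*δ) * ‖wbar‖)^2) :=
              (Real.sqrt_sq h0).symm
          _ ≤ Real.sqrt (|wn|^2) := Real.sqrt_le_sqrt hsq
          _ = |wn| := Real.sqrt_sq (abs_nonneg wn)
      rw [le_div_iff₀ hb0]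
      exact hle
    have h3 : ε * Real.sqrt (‖ξbar‖ ^ 2 + ξn ^ 2) / (‖ξbar‖ * ‖wbar‖) ≤ 4 * ε := by
      rw [hSval, hξ, div_le_iff₀ hDpos]
      nlinarith [mul_nonneg hε hξn.le, Real.sqrt_nonneg 2]
    rw [ge_iff_le]
    linarith
end
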